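/- For the univariate depth D(x;μ) = min{μ((-∞,x]), μ([x,∞))}, the depth of x equals 1 - sup{μ(I) : I a compact interval with x ∉ I} , i.e. the depth based on the family of compact intervals coincides with the classical univariate depth. -/

import Mathlib

open MeasureTheory
open scoped ENNReal

lemma mono_left_aux (x : ℝ) :
    Monotone (fun n : ℕ => Set.Icc (x - (n+1)) (x - 1/(n+1))) := by
  intro m n hmn
  apply Set.Icc_subset_Icc
  · have : (m:ℝ) + 1 ≤ (n:ℝ) + 1 := by exact_mod_cast Nat.succ_le_succ hmn
    linarith
  · have h : (1:ℝ)/((n:ℝ)+1) ≤ 1/((m:ℝ)+1) := by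
      apply one_div_le_one_div_of_le
      · positivity
      · exact_mod_cast Nat.succ_le_succ hmn
    linarith

lemma mono_right_aux (x : ℝ) :
    Monotone (fun n : ℕ => Set.Icc (x + 1/(n+1)) (x + (n+1))) := by
  intro m n hmn
  apply Set.Icc_subset_Icc
  · have h : (1:ℝ)/((n:ℝ)+1) ≤ 1/((m:ℝ)+1) := by
      apply one_div_le_one_div_of_le
      · positivity
      · exact_mod_cast Nat.succ_le_succ hmn
    linarith
  · have : (m:ℝ) + 1 ≤ (n:ℝ) + 1 := by exact_mod_cast Nat.succ_le_succ hmn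
    linarith

lemma iUnion_left_aux (x : ℝ) :
    (⋃ n : ℕ, Set.Icc (x - (n+1)) (x - 1/(n+1))) = Set.Iio x := by
  ext y
  simp only [Set.mem_iUnion, Set.mem_Icc, Set.mem_Iio]
  constructor
  · rintro ⟨n, h1, h2⟩
    have : (0:ℝ) < 1/((n:ℝ)+1) := by positivity
    linarith
  · intro hy
    obtain ⟨n1, hn1⟩ := exists_nat_one_div_lt (sub_pos.mpr hy)
    obtain ⟨n2, hn2⟩ := exists_nat_ge (x - y)
    refine ⟨max n1 n2, ?_, ?_⟩
    · have : (n2:ℝ) ≤ ((max n1 n2 : ℕ) : ℝ) := by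
        exact_mod_cast le_max_right n1 n2
      linarith
    · have h : (1:ℝ)/(((max n1 n2 : ℕ) : ℝ)+1) ≤ 1/((n1:ℝ)+1) := by
        apply one_div_le_one_div_of_le
        · positivity
        · exact_mod_cast Nat.succ_le_succ (le_max_left n1 n2)
      linarith

lemma iUnion_right_aux (x : ℝ) :
    (⋃ n : ℕ, Set.Icc (x + 1/(n+1)) (x + (n+1))) = Set.Ioi x := by
  ext y
  simp only [Set.mem_iUnion, Set.mem_Icc, Set.mem_Ioi]
  constructor
  · rintro ⟨n, h1, h2⟩
    have : (0:ℝ) < 1/((n:ℝ)+1) := by positivity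
    linarith
  · intro hy
    obtain ⟨n1, hn1⟩ := exists_nat_one_div_lt (sub_pos.mpr hy)
    obtain ⟨n2, hn2⟩ := exists_nat_ge (y - x)
    refine ⟨max n1 n2, ?_, ?_⟩
    · have h : (1:ℝ)/(((max n1 n2 : ℕ) : ℝ)+1) ≤ 1/((n1:ℝ)+1) := by
        apply one_div_le_one_div_of_le
        · positivity
        · exact_mod_cast Nat.succ_le_succ (le_max_left n1 n2)
      linarith
    · have : (n2:ℝ) ≤ ((max n1 n2 : ℕ) : ℝ) := by
        exact_mod_cast le_max_right n1 n2
      linarith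

/-- The univariate depth `min{μ(-∞,x], μ[x,∞)}` coincides with the depth based on the
family of compact intervals: `1 - sup{μ [a,b] : x ∉ [a,b]}`. -/
theorem univariate_depth_eq_interval_depth (μ : Measure ℝ) [IsProbabilityMeasure μ] (x : ℝ) :
    min (μ (Set.Iic x)) (μ (Set.Ici x)) =
      1 - sSup {r : ℝ≥0∞ | ∃ a b : ℝ, x ∉ Set.Icc a b ∧ r = μ (Set.Icc a b)} := by
  set S := {r : ℝ≥0∞ | ∃ a b : ℝ, x ∉ Set.Icc a b ∧ r = μ (Set.Icc a b)} with hS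
  have hsup : sSup S = max (μ (Set.Iio x)) (μ (Set.Ioi x)) := by
    apply le_antisymm
    · apply sSup_le
      rintro r ⟨a, b, hx, rfl⟩
      by_cases h : x < a
      · refine le_trans (measure_mono ?_) (le_max_right _ _)
        intro y hy
        exact lt_of_lt_of_le h hy.1
      · push_neg at h
        have hbx : b < x := by
          by_contra hbx
          push_neg at hbx
          exact hx ⟨h, hbx⟩
        refine le_trans (measure_mono ?_) (le_max_left _ _)
        intro y hy
        exact lt_of_le_of_lt hy.2 hbx
    · apply max_le
      · rw [← iUnion_left_aux x,
          Directed.measure_iUnion (Monotone.directed_le (mono_left_aux x))]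
        apply iSup_le
        intro n
        apply le_sSup
        refine ⟨x - (n+1), x - 1/(n+1), ?_, rfl⟩
        intro hmem
        have h2 := hmem.2
        have : (0:ℝ) < 1/((n:ℝ)+1) := by positivity
        linarith
      · rw [← iUnion_right_aux x,
          Directed.measure_iUnion (Monotone.directed_le (mono_right_aux x))]
        apply iSup_le
        intro n
        apply le_sSup
        refine ⟨x + 1/(n+1), x + (n+1), ?_, rfl⟩
        intro hmem
        have h1 := hmem.1
        have : (0:ℝ) < 1/((n:ℝ)+1) := by positivity
        linarith
  rw [hsup]
  have hIic : μ (Set.Iic x) = 1 - μ (Set.Ioi x) := by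
    rw [← prob_compl_eq_one_sub measurableSet_Ioi, Set.compl_Ioi]
  have hIci : μ (Set.Ici x) = 1 - μ (Set.Iio x) := by
    rw [← prob_compl_eq_one_sub measurableSet_Iio, Set.compl_Iio]
  rw [hIic, hIci]
  rcases le_total (μ (Set.Iio x)) (μ (Set.Ioi x)) with h | h
  · rw [max_eq_right h, min_eq_left (tsub_le_tsub_left h 1)]
  · rw [max_eq_left h, min_eq_right (tsub_le_tsub_left h 1)]
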